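/- Let w_p(n) denote the Lebesgue volume of the ball B_p^n = {x ∈ ℝ^n : Σ_{i=1}^n |x(i)|^p ≤ n} (for p = ∞, B_∞^n = [-1,1]^n). Then there is an absolute constant C such that w_p(k) ≤ C · w_p(n) whenever 1 ≤ k ≤ n and 1 ≤ p ≤ ∞. -/

import Mathlib

open MeasureTheory

/-- The normalized `L_p^n` ball `B_p^n = {x : ∑ |x i|^p ≤ n}` (finite `p`). -/
def lpBall (p : ℝ) (n : ℕ) : Set (Fin n → ℝ) :=
  {x | ∑ i, |x i| ^ p ≤ (n : ℝ)}

/-- The `L_∞^n` ball `B_∞^n = [-1,1]^n`. -/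
def cubeBall (n : ℕ) : Set (Fin n → ℝ) := {x | ∀ i, |x i| ≤ 1}

lemma lpBall_measurableSet (p : ℝ) (hp : 1 ≤ p) (n : ℕ) : MeasurableSet (lpBall p n) := by
  have h : Continuous fun x : Fin n → ℝ => ∑ i, |x i| ^ p :=
    continuous_finset_sum _ fun i _ =>
      ((continuous_apply i).abs).rpow_const fun x => Or.inr (by linarith)
  exact h.measurable measurableSet_Iic

lemma lpBall_volume_lt_top (p : ℝ) (hp : 1 ≤ p) (n : ℕ) : volume (lpBall p n) < ⊤ := by
  have hp0 : p ≠ 0 := by linarith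
  have hsub : lpBall p n ⊆
      Set.pi Set.univ fun _ : Fin n => Set.Icc (-((n : ℝ) ^ p⁻¹)) ((n : ℝ) ^ p⁻¹) := by
    intro x hx i _
    have hterm : |x i| ^ p ≤ (n : ℝ) :=
      le_trans (Finset.single_le_sum (f := fun j => |x j| ^ p)
        (fun j _ => Real.rpow_nonneg (abs_nonneg _) p) (Finset.mem_univ i)) hx
    have h2 := Real.rpow_le_rpow (Real.rpow_nonneg (abs_nonneg _) p) hterm
      (by positivity : (0 : ℝ) ≤ p⁻¹)
    rw [Real.rpow_rpow_inv (abs_nonneg _) hp0] at h2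
    exact Set.mem_Icc.2 (abs_le.mp h2)
  refine lt_of_le_of_lt (measure_mono hsub) ?_
  rw [volume_pi_pi]
  exact ENNReal.prod_lt_top fun i _ => by simp [Real.volume_Icc]

lemma lpBall_volume_step (p : ℝ) (hp : 1 ≤ p) (n : ℕ) :
    volume (lpBall p n) ≤ volume (lpBall p (n + 1)) := by
  have hmp := volume_preserving_piFinSuccAbove (fun _ : Fin (n + 1) => ℝ) 0
  set e := MeasurableEquiv.piFinSuccAbove (fun _ : Fin (n + 1) => ℝ) 0 with he
  have hS : MeasurableSet (Set.Icc (-1 : ℝ) 1 ×ˢ lpBall p n) :=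
    measurableSet_Icc.prod (lpBall_measurableSet p hp n)
  have h1 : volume (e ⁻¹' (Set.Icc (-1 : ℝ) 1 ×ˢ lpBall p n)) = 2 * volume (lpBall p n) := by
    rw [hmp.measure_preimage hS.nullMeasurableSet, Measure.volume_eq_prod,
      Measure.prod_prod, Real.volume_Icc]
    norm_num
  have hsub : e ⁻¹' (Set.Icc (-1 : ℝ) 1 ×ˢ lpBall p n) ⊆ lpBall p (n + 1) := by
    intro x hx
    have hx0 : |x 0| ≤ 1 := abs_le.mpr (Set.mem_Icc.mp hx.1)
    have hxs : ∑ j : Fin n, |x ((0 : Fin (n + 1)).succAbove j)| ^ p ≤ (n : ℝ) := hx.2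
    simp only [Fin.succAbove_zero] at hxs
    have hx0p : |x 0| ^ p ≤ 1 := Real.rpow_le_one (abs_nonneg _) hx0 (by linarith)
    show ∑ i, |x i| ^ p ≤ ((n + 1 : ℕ) : ℝ)
    rw [Fin.sum_univ_succ]
    push_cast
    linarith
  calc volume (lpBall p n) ≤ 2 * volume (lpBall p n) :=
        le_mul_of_one_le_left zero_le one_le_two
    _ = volume (e ⁻¹' (Set.Icc (-1 : ℝ) 1 ×ˢ lpBall p n)) := h1.symm
    _ ≤ volume (lpBall p (n + 1)) := measure_mono hsub

lemma lpBall_volume_mono (p : ℝ) (hp : 1 ≤ p) : Monotone fun n => volume (lpBall p n) :=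
  monotone_nat_of_le_succ fun n => lpBall_volume_step p hp n

lemma cubeBall_volume (n : ℕ) : volume (cubeBall n) = 2 ^ n := by
  have h : cubeBall n = Set.pi Set.univ fun _ : Fin n => Set.Icc (-1 : ℝ) 1 := by
    ext x
    simp only [cubeBall, Set.mem_setOf_eq, Set.mem_univ_pi, Set.mem_Icc, abs_le]
  rw [h, volume_pi_pi]
  norm_num [Real.volume_Icc]

/-- **Lemma 4.2.** The volumes `w_p(n) = vol(B_p^n)` approximately increase
in `n`: there is an absolute constant `C` with `w_p(k) ≤ C w_p(n)` for all
`1 ≤ k ≤ n` and `1 ≤ p ≤ ∞`. -/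
theorem lpBall_volume_almost_increasing :
    ∃ C : ℝ, 0 < C ∧
      (∀ (p : ℝ), 1 ≤ p → ∀ (k n : ℕ), 1 ≤ k → k ≤ n →
        (volume (lpBall p k)).toReal ≤ C * (volume (lpBall p n)).toReal) ∧
      (∀ (k n : ℕ), 1 ≤ k → k ≤ n →
        (volume (cubeBall k)).toReal ≤ C * (volume (cubeBall n)).toReal) := by
  refine ⟨1, one_pos, ?_, ?_⟩
  · intro p hp k n _ hkn
    rw [one_mul]
    exact ENNReal.toReal_mono (lpBall_volume_lt_top p hp n).ne (lpBall_volume_mono p hp hkn)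
  · intro k n _ hkn
    rw [one_mul, cubeBall_volume, cubeBall_volume]
    exact ENNReal.toReal_mono (by simp) (by exact_mod_cast pow_le_pow_right₀ one_le_two hkn)
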